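/- Let G be a finite nonabelian group. If 𝔠 ⊆ {C_G(g) : g ∈ G \ Z(G)} is an irredundant cover of G by centralizers of noncentral elements, then |𝔠| is at most the number of maximal elements of 𝒵(G) = {Z(C_G(g)) : g ∈ G \ Z(G)}. -/

import Mathlib

variable {G : Type*} [Group G] [Fintype G]

/-- The centralizer of an element `g` of `G`. -/
def centG (g : G) : Subgroup G := Subgroup.centralizer ({g} : Set G)

/-- `Z(g) = Z(C_G(g))`, the center of the centralizer of `g`, as a subgroup of `G`. -/
def zCent (g : G) : Subgroup G :=
  (Subgroup.center ↥(Subgroup.centralizer ({g} : Set G))).map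
    (Subgroup.centralizer ({g} : Set G)).subtype

lemma mem_centG {g a : G} : a ∈ centG g ↔ a * g = g * a :=
  Subgroup.mem_centralizer_singleton_iff

lemma centG_comm {g a : G} (h : a ∈ centG g) : g ∈ centG a := by
  rw [mem_centG] at h ⊢; exact h.symm

lemma self_mem_zCent (g : G) : g ∈ zCent g := by
  have hg : g ∈ Subgroup.centralizer ({g} : Set G) :=
    Subgroup.mem_centralizer_singleton_iff.2 rfl
  refine Subgroup.mem_map.2 ⟨⟨g, hg⟩, ?_, rfl⟩
  rw [Subgroup.mem_center_iff]
  intro b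
  ext
  exact (Subgroup.mem_centralizer_singleton_iff.1 b.2)

lemma zCent_le_centG (g : G) : zCent g ≤ centG g := by
  intro a ha
  obtain ⟨z, _, rfl⟩ := Subgroup.mem_map.1 ha
  exact z.2

lemma zCent_commutes {g a b : G} (ha : a ∈ zCent g) (hb : b ∈ centG g) :
    b * a = a * b := by
  obtain ⟨z, hz, rfl⟩ := Subgroup.mem_map.1 ha
  rw [Subgroup.mem_center_iff] at hz
  exact congrArg Subtype.val (hz ⟨b, hb⟩)

/-- `C_G(h) ≤ C_G(x)` whenever `Z(C_G(x)) ≤ Z(C_G(h))`. -/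
lemma centG_le_of_zCent_le {x h : G} (hle : zCent x ≤ zCent h) :
    centG h ≤ centG x := by
  intro b hb
  -- b commutes with every element of zCent h, in particular with x
  have hx : x ∈ zCent h := hle (self_mem_zCent x)
  exact mem_centG.2 (zCent_commutes hx hb)

lemma finite_subgroups : Finite (Subgroup G) :=
  Finite.of_injective (fun H => (H : Set G)) SetLike.coe_injective

lemma exists_max_above (T : Set (Subgroup G)) (A : Subgroup G) (hA : A ∈ T) :
    ∃ M ∈ T, A ≤ M ∧ ∀ B ∈ T, M ≤ B → M = B := by
  have : Finite (Subgroup G) := finite_subgroups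
  obtain ⟨M, hM, hmax⟩ := Set.Finite.exists_maximalFor id {B ∈ T | A ≤ B}
    (Set.toFinite _) ⟨A, hA, le_rfl⟩
  exact ⟨M, hM.1, hM.2, fun B hB hle => le_antisymm hle (hmax ⟨hB, hM.2.trans hle⟩ hle)⟩

theorem stmt_13 (hna : ∃ a b : G, a * b ≠ b * a) (𝔠 : Finset (Subgroup G))
    (hmem : ∀ H ∈ 𝔠, ∃ g : G, g ∉ Subgroup.center G ∧ H = centG g)
    (hcov : ∀ x : G, ∃ H ∈ 𝔠, x ∈ H)
    (hirr : ∀ 𝔡 : Finset (Subgroup G), 𝔡 ⊂ 𝔠 → ¬ ∀ x : G, ∃ H ∈ 𝔡, x ∈ H) :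
    𝔠.card ≤ Set.ncard {H : Subgroup G |
      (∃ g : G, g ∉ Subgroup.center G ∧ H = zCent g) ∧
      ∀ g : G, g ∉ Subgroup.center G → H ≤ zCent g → H = zCent g} := by
  classical
  have hfinsub : Finite (Subgroup G) := finite_subgroups
  set S := {H : Subgroup G |
      (∃ g : G, g ∉ Subgroup.center G ∧ H = zCent g) ∧
      ∀ g : G, g ∉ Subgroup.center G → H ≤ zCent g → H = zCent g} with hS
  set T := {H : Subgroup G | ∃ g : G, g ∉ Subgroup.center G ∧ H = zCent g} with hT
  -- step 1: each member of 𝔠 has a point covered only by it, and that point is noncentral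
  have hx : ∀ H ∈ 𝔠, ∃ x : G, x ∉ Subgroup.center G ∧ x ∈ H ∧
      ∀ K ∈ 𝔠, x ∈ K → K = H := by
    intro H hH
    have hsub : 𝔠.erase H ⊂ 𝔠 := Finset.erase_ssubset hH
    have hnc := hirr _ hsub
    push_neg at hnc
    obtain ⟨x, hxall⟩ := hnc
    have huniq : ∀ K ∈ 𝔠, x ∈ K → K = H := by
      intro K hK hxK
      by_contra hne
      exact hxall K (Finset.mem_erase.2 ⟨hne, hK⟩) hxK
    obtain ⟨K0, hK0, hxK0⟩ := hcov x
    have hK0H : K0 = H := huniq K0 hK0 hxK0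
    subst hK0H
    refine ⟨x, ?_, hxK0, huniq⟩
    -- x is noncentral: otherwise x lies in every member, but 𝔠 has a member ≠ H
    intro hxc
    -- H is a proper subgroup: find b ∉ H
    obtain ⟨g, hg, rfl⟩ := hmem _ hK0
    rw [Subgroup.mem_center_iff] at hg
    push_neg at hg
    obtain ⟨b, hb⟩ := hg
    have hbH : b ∉ centG g := fun h => hb (mem_centG.1 h)
    obtain ⟨K, hK, hbK⟩ := hcov b
    have hKne : K ≠ centG g := fun h => hbH (h ▸ hbK)
    have hxK : x ∈ K := by
      obtain ⟨k, _, rfl⟩ := hmem K hK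
      exact Subgroup.center_le_centralizer ({k} : Set G) hxc
    exact hKne (huniq K hK hxK)
  choose xf hxnc hxmem hxuniq using hx
  -- step 2: choose a maximal element of T above zCent (xf H)
  have hmax : ∀ (H : Subgroup G) (hH : H ∈ 𝔠), ∃ M ∈ T, zCent (xf H hH) ≤ M ∧
      ∀ B ∈ T, M ≤ B → M = B := by
    intro H hH
    exact exists_max_above T _ ⟨xf H hH, hxnc H hH, rfl⟩
  choose Mf hMT hMle hMmax using hmax
  -- the chosen maximal elements lie in S
  have hMS : ∀ H (hH : H ∈ 𝔠), Mf H hH ∈ S := by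
    intro H hH
    refine ⟨hMT H hH, fun g hg hle => hMmax H hH _ ⟨g, hg, rfl⟩ hle⟩
  -- step 3: injectivity
  have hinj : ∀ H (hH : H ∈ 𝔠) H' (hH' : H' ∈ 𝔠), Mf H hH = Mf H' hH' → H = H' := by
    intro H hH H' hH' heq
    obtain ⟨h, hhnc, hMh⟩ := hMT H hH
    -- centG h ≤ centG (xf H) and centG h ≤ centG (xf H')
    have h1 : centG h ≤ centG (xf H hH) :=
      centG_le_of_zCent_le (hMh ▸ hMle H hH)
    have h2 : centG h ≤ centG (xf H' hH') :=
      centG_le_of_zCent_le (hMh ▸ heq ▸ hMle H' hH')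
    obtain ⟨K, hK, hhK⟩ := hcov h
    obtain ⟨k, _, hKk⟩ := hmem K hK
    have hkh : k ∈ centG h := centG_comm (hKk ▸ hhK)
    have hxHK : xf H hH ∈ K := hKk ▸ centG_comm (h1 hkh)
    have hxH'K : xf H' hH' ∈ K := hKk ▸ centG_comm (h2 hkh)
    rw [← hxuniq H hH K hK hxHK, ← hxuniq H' hH' K hK hxH'K]
  -- step 4: counting
  have hSfin : S.Finite := Set.toFinite S
  let f : {H // H ∈ 𝔠} → S := fun H => ⟨Mf H.1 H.2, hMS H.1 H.2⟩
  have hfinj : Function.Injective f := by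
    rintro ⟨H, hH⟩ ⟨H', hH'⟩ hf
    exact Subtype.ext (hinj H hH H' hH' (congrArg Subtype.val hf))
  have : Nat.card {H // H ∈ 𝔠} ≤ Nat.card S :=
    Nat.card_le_card_of_injective f hfinj
  rwa [Nat.card_eq_fintype_card, Fintype.card_coe, Nat.card_coe_set_eq] at this
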